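/- Let G be a group, n ≥ 3, E the set of idempotents of End F_n(G), and IG(E) the free idempotent generated monoid over E. Let a : {1,…,n} → G with a(1) = 1 and j ∈ {1,…,n}. If a(j) = 1 (equivalently, the composite e_{1j} e_{a,1} equals e_{11}), then ē_{11} ē_{a,j} ē_{11} = ē_{11} in IG(E). -/

import Mathlib

/-- An endomorphism of the rank-`n` free left `G`-act `F_n(G) = G × Fin n`
(the formal symbols `g x_i` are the pairs `(g, i)`), where the action is
`h • (g, i) = (h * g, i)` and equivariance says `(h • x) a = h • (x a)`. -/
structure ActEnd (G : Type*) [Group G] (n : ℕ) : Type _ where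
  toFun : G × Fin n → G × Fin n
  equivariant : ∀ (h : G) (x : G × Fin n),
    toFun (h * x.1, x.2) = (h * (toFun x).1, (toFun x).2)

namespace ActEnd

variable {G : Type*} [Group G] {n : ℕ}

/-- Composition is written left-to-right: `x (a * b) = (x a) b`. -/
instance : Monoid (ActEnd G n) where
  mul a b := ⟨fun x => b.toFun (a.toFun x), by
    intro h x
    try dsimp only
    rw [a.equivariant h x, b.equivariant]⟩
  one := ⟨id, fun _ _ => rfl⟩
  mul_assoc _ _ _ := rfl
  one_mul _ := rfl
  mul_one _ := rfl

@[simp] theorem mul_toFun (a b : ActEnd G n) (x : G × Fin n) :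
    (a * b).toFun x = b.toFun (a.toFun x) := rfl

theorem ext' {a b : ActEnd G n} (h : a.toFun = b.toFun) : a = b := by
  cases a; cases b; cases h; rfl

/-- The rank of an endomorphism of `F_n(G)`: the number of indices `j` such
that `G x_j` meets the image. -/
noncomputable def rank (a : ActEnd G n) : ℕ :=
  Nat.card {j : Fin n // ∃ x, (a.toFun x).2 = j}

end ActEnd

namespace ActEnd

variable {G : Type*} [Group G] {n : ℕ}

/-- The rank-1 idempotent `e_{a,j}` given by `(g x_t) e_{a,j} = (g * a t * (a j)⁻¹) x_j`.
Taking `a` constantly `1` gives `e_{1j}`, and also `j = 0` gives `e_{11}`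
(indices `1, …, n` are realised as `Fin n`, with `1 ↦ 0`). -/
def eaj (a : Fin n → G) (j : Fin n) : ActEnd G n :=
  ⟨fun x => (x.1 * a x.2 * (a j)⁻¹, j), by intro h x; simp [mul_assoc]⟩

theorem eaj_idem (a : Fin n → G) (j : Fin n) : eaj a j * eaj a j = eaj a j := by
  apply ext'
  funext x
  simp [eaj, mul_assoc]

/-- The map `a_g : g' x_t ↦ (g' * g) x_1`. -/
def aMap (g : G) (h0 : 0 < n) : ActEnd G n :=
  ⟨fun x => (x.1 * g, ⟨0, h0⟩), by intro h x; simp [mul_assoc]⟩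

end ActEnd

/-- The principal left ideal `M a` of `a`. -/
def lIdeal {M : Type*} [Monoid M] (a : M) : Set M := Set.range fun m => m * a

/-- The principal right ideal `a M` of `a`. -/
def rIdeal {M : Type*} [Monoid M] (a : M) : Set M := Set.range fun m => a * m

/-- The `H`-class of `e`: all elements that are both `L`- and `R`-related to `e`. -/
def hClass {M : Type*} [Monoid M] (e : M) : Set M :=
  {a | lIdeal a = lIdeal e ∧ rIdeal a = rIdeal e}

/-- The defining relation of the free idempotent generated monoid `IG(E)`:
`ē f̄ = (e f)‾` whenever `{e, f} ∩ {e f, f e} ≠ ∅`. -/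
def igRel (M : Type*) [Monoid M] :
    FreeMonoid {e : M // e * e = e} → FreeMonoid {e : M // e * e = e} → Prop :=
  fun x y => ∃ e f g : {e : M // e * e = e},
    (e.1 * f.1 = e.1 ∨ e.1 * f.1 = f.1 ∨ f.1 * e.1 = e.1 ∨ f.1 * e.1 = f.1) ∧
    e.1 * f.1 = g.1 ∧
    x = FreeMonoid.of e * FreeMonoid.of f ∧ y = FreeMonoid.of g

/-- The free idempotent generated monoid over the biordered set of idempotents
of `M`: the presented monoid with generators `ē` for each idempotent `e` and
relations `ē f̄ = (e f)‾` whenever `{e, f} ∩ {e f, f e} ≠ ∅`. -/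
abbrev IG (M : Type*) [Monoid M] : Type _ := (conGen (igRel M)).Quotient

/-- The generator `ē` of `IG(E)` corresponding to the idempotent `e`. -/
def ebar {M : Type*} [Monoid M] (e : {e : M // e * e = e}) : IG M :=
  (conGen (igRel M)).mk' (FreeMonoid.of e)

/-- `ē_{a,j}` as an element of `IG(E)` for `E` the idempotents of `End F_n(G)`. -/
def igE {G : Type*} [Group G] {n : ℕ} (a : Fin n → G) (j : Fin n) : IG (ActEnd G n) :=
  ebar ⟨ActEnd.eaj a j, ActEnd.eaj_idem a j⟩

/-- `ē_{11}` as an element of `IG(E)`. -/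
def ig11 {G : Type*} [Group G] {n : ℕ} (h0 : 0 < n) : IG (ActEnd G n) :=
  igE (fun _ => (1 : G)) ⟨0, h0⟩

section proofIG

variable {G : Type*} [Group G] {n : ℕ}

lemma ebar_mul {M : Type*} [Monoid M] (e f g : {e : M // e * e = e})
    (hcond : e.1 * f.1 = e.1 ∨ e.1 * f.1 = f.1 ∨ f.1 * e.1 = e.1 ∨ f.1 * e.1 = f.1)
    (hg : e.1 * f.1 = g.1) : ebar e * ebar f = ebar g := by
  show (conGen (igRel M)).mk' (FreeMonoid.of e) * (conGen (igRel M)).mk' (FreeMonoid.of f)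
      = (conGen (igRel M)).mk' (FreeMonoid.of g)
  rw [← map_mul]
  exact Con.eq _ |>.mpr (ConGen.Rel.of _ _ ⟨e, f, g, hcond, hg, rfl, rfl⟩)

/-- The rank-2 idempotent fixing `x_0` and `x_j` and sending everything else to `x_0`. -/
def qMap (h0 : 0 < n) (j : Fin n) : ActEnd G n :=
  ⟨fun x => (x.1, if x.2 = ⟨0, h0⟩ ∨ x.2 = j then x.2 else ⟨0, h0⟩), fun _ _ => rfl⟩

lemma qMap_idem (h0 : 0 < n) (j : Fin n) : qMap (G := G) h0 j * qMap h0 j = qMap h0 j := by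
  apply ActEnd.ext'
  funext x
  simp only [ActEnd.mul_toFun, qMap]
  split_ifs <;> simp_all

theorem stmt13' (hn : 3 ≤ n)
    (a : Fin n → G) (ha : a ⟨0, lt_of_lt_of_le (by norm_num) hn⟩ = 1) (j : Fin n) (haj : a j = 1) :
    ig11 (G := G) (n := n) (lt_of_lt_of_le (by norm_num) hn) * igE a j * ig11 (G := G) (n := n) (lt_of_lt_of_le (by norm_num) hn)
      = ig11 (G := G) (n := n) (lt_of_lt_of_le (by norm_num) hn) := by
  have h0 : 0 < n := by omega
  have ha' : a ⟨0, h0⟩ = 1 := ha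
  -- the idempotents
  set E11 : {e : ActEnd G n // e * e = e} :=
    ⟨ActEnd.eaj (fun _ => 1) ⟨0, h0⟩, ActEnd.eaj_idem _ _⟩ with hE11
  set F : {e : ActEnd G n // e * e = e} :=
    ⟨ActEnd.eaj a j, ActEnd.eaj_idem _ _⟩ with hF
  set E1j : {e : ActEnd G n // e * e = e} :=
    ⟨ActEnd.eaj (fun _ => 1) j, ActEnd.eaj_idem _ _⟩ with hE1j
  set Q : {e : ActEnd G n // e * e = e} := ⟨qMap h0 j, qMap_idem h0 j⟩ with hQ
  -- monoid identities
  have h1 : E11.1 * Q.1 = E11.1 := by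
    apply ActEnd.ext'; funext x
    simp [hE11, hQ, ActEnd.eaj, qMap]
  have h2 : F.1 * Q.1 = F.1 := by
    apply ActEnd.ext'; funext x
    simp [hF, hQ, ActEnd.eaj, qMap]
  have h3 : Q.1 * F.1 = E1j.1 := by
    apply ActEnd.ext'; funext x
    simp only [ActEnd.mul_toFun, hF, hQ, hE1j, ActEnd.eaj, qMap]
    split_ifs with h
    · rcases h with h | h
      · rw [h]; simp [ha', haj]
      · rw [h]; simp [haj]
    · simp [ha', haj]
  have h4 : E11.1 * E1j.1 = E1j.1 := by
    apply ActEnd.ext'; funext x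
    simp [hE11, hE1j, ActEnd.eaj]
  have h5 : E1j.1 * E11.1 = E11.1 := by
    apply ActEnd.ext'; funext x
    simp [hE11, hE1j, ActEnd.eaj]
  -- the computation in IG
  have key1 : ebar E11 * ebar Q = ebar E11 := ebar_mul _ _ _ (Or.inl h1) h1
  have key2 : ebar Q * ebar F = ebar E1j :=
    ebar_mul _ _ _ (Or.inr (Or.inr (Or.inr h2))) h3
  have key3 : ebar E11 * ebar E1j = ebar E1j := ebar_mul _ _ _ (Or.inr (Or.inl h4)) h4
  have key4 : ebar E1j * ebar E11 = ebar E11 := ebar_mul _ _ _ (Or.inr (Or.inl h5)) h5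
  show ebar E11 * ebar F * ebar E11 = ebar E11
  calc ebar E11 * ebar F * ebar E11
      = ebar E11 * (ebar Q * ebar F) * ebar E11 := by rw [← mul_assoc, key1]
    _ = ebar E11 * ebar E1j * ebar E11 := by rw [key2]
    _ = ebar E1j * ebar E11 := by rw [key3]
    _ = ebar E11 := key4

end proofIG


/-- If `a j = 1` (equivalently `e_{1j} e_{a,1} = e_{11}`), then
`ē_{11} ē_{a,j} ē_{11} = ē_{11}` in `IG(E)`. -/
theorem stmt13 {G : Type*} [Group G] {n : ℕ} (hn : 3 ≤ n)
    (a : Fin n → G) (ha : a ⟨0, by omega⟩ = 1) (j : Fin n) (haj : a j = 1) :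
    ig11 (G := G) (n := n) (by omega) * igE a j * ig11 (G := G) (n := n) (by omega) = ig11 (G := G) (n := n) (by omega) := by
  exact stmt13' hn a ha j haj
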